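/- The pDPA functional recursion holds: Cost*_{k,t}(μ) = min{ Cost*_{k,t-1}(μ) + γ(y_t, μ), C_{k-1,t} }, where Cost*_{k,t}(μ) = min over k ≤ τ ≤ t of Cost^τ_{k,t}(μ), with Cost^τ_{k,t}(μ) = C_{k-1,τ} + ∑_{i=τ+1}^{t} γ(y_i, μ) for τ < t and Cost^t_{k,t}(μ) = C_{k-1,t}. -/

import Mathlib

/-- The pDPA candidate cost function `Cost^τ_{k,t}(μ)`. -/
noncomputable def pdpaCost (y : ℕ → ℝ) (γ : ℝ → ℝ → ℝ) (Ck : ℕ → ℕ → ℝ)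
    (k τ t : ℕ) (μ : ℝ) : ℝ :=
  if τ = t then Ck (k - 1) t else Ck (k - 1) τ + ∑ i ∈ Finset.Ioc τ t, γ (y i) μ

/-- `Cost*_{k,t}(μ) = min over k ≤ τ ≤ t of Cost^τ_{k,t}(μ)` (junk value 0 if t < k). -/
noncomputable def pdpaCostStar (y : ℕ → ℝ) (γ : ℝ → ℝ → ℝ) (Ck : ℕ → ℕ → ℝ)
    (k t : ℕ) (μ : ℝ) : ℝ :=
  if h : k ≤ t then
    (Finset.Icc k t).inf' (Finset.nonempty_Icc.mpr h) (fun τ => pdpaCost y γ Ck k τ t μ)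
  else 0

/-- `Set^τ_{k,t} = {μ : Cost^τ_{k,t}(μ) = Cost*_{k,t}(μ)}`. -/
noncomputable def pdpaSet (y : ℕ → ℝ) (γ : ℝ → ℝ → ℝ) (Ck : ℕ → ℕ → ℝ)
    (k τ t : ℕ) : Set ℝ :=
  {μ | pdpaCost y γ Ck k τ t μ = pdpaCostStar y γ Ck k t μ}

/-- `I^τ_{k,t} = {μ : Cost^τ_{k,t}(μ) ≤ C_{k-1,t}}`. -/
noncomputable def pdpaI (y : ℕ → ℝ) (γ : ℝ → ℝ → ℝ) (Ck : ℕ → ℕ → ℝ)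
    (k τ t : ℕ) : Set ℝ :=
  {μ | pdpaCost y γ Ck k τ t μ ≤ Ck (k - 1) t}


lemma pdpaCost_step (y : ℕ → ℝ) (γ : ℝ → ℝ → ℝ) (Ck : ℕ → ℕ → ℝ)
    (k τ t : ℕ) (ht : 1 ≤ t) (hτ : τ ≤ t - 1) (μ : ℝ) :
    pdpaCost y γ Ck k τ t μ = pdpaCost y γ Ck k τ (t - 1) μ + γ (y t) μ := by
  have htt : t - 1 + 1 = t := by omega
  have hτt : τ ≠ t := by omega
  unfold pdpaCost
  rw [if_neg hτt]
  have hsum : ∑ i ∈ Finset.Ioc τ t, γ (y i) μ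
      = ∑ i ∈ Finset.Ioc τ (t - 1), γ (y i) μ + γ (y t) μ := by
    conv_lhs => rw [← htt]
    rw [Finset.sum_Ioc_succ_top hτ, htt]
  by_cases h : τ = t - 1
  · subst h
    rw [if_pos rfl, hsum, Finset.Ioc_self, Finset.sum_empty, zero_add]
  · rw [if_neg h, hsum]; ring

/-- the pDPA functional recursion. -/
theorem pdpa_functional_recursion (y : ℕ → ℝ) (γ : ℝ → ℝ → ℝ)
    (C : ℕ → ℕ → ℝ)
    (hC : ∀ τ t : ℕ, τ < t →
      IsLeast {x : ℝ | ∃ μ : ℝ, x = ∑ i ∈ Finset.Ioc τ t, γ (y i) μ} (C τ t))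
    (Ck : ℕ → ℕ → ℝ) (hCk0 : ∀ t : ℕ, 1 ≤ t → Ck 0 t = C 0 t)
    (hrec : ∀ k T : ℕ, ∀ hk : 1 ≤ k, ∀ hT : k + 1 ≤ T,
      Ck k T = (Finset.Ico k T).inf' (Finset.nonempty_Ico.mpr (by omega))
        (fun τ => Ck (k - 1) τ + C τ T))
    : ∀ k t : ℕ, 1 ≤ k → k + 1 ≤ t → ∀ μ : ℝ,
      pdpaCostStar y γ Ck k t μ =
        min (pdpaCostStar y γ Ck k (t - 1) μ + γ (y t) μ) (Ck (k - 1) t) := by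
  intro k t hk ht μ
  have ht1 : k ≤ t - 1 := by omega
  have hkt : k ≤ t := by omega
  rw [pdpaCostStar, pdpaCostStar, dif_pos hkt, dif_pos ht1]
  set B := (Finset.Icc k (t - 1)).inf' (Finset.nonempty_Icc.mpr ht1)
    (fun τ => pdpaCost y γ Ck k τ (t - 1) μ) with hB
  have hft : pdpaCost y γ Ck k t t μ = Ck (k - 1) t := by
    unfold pdpaCost; rw [if_pos rfl]
  apply le_antisymm
  · apply le_min
    · obtain ⟨τ0, hτ0, hτ0eq⟩ := Finset.exists_mem_eq_inf'
        (Finset.nonempty_Icc.mpr ht1) (fun τ => pdpaCost y γ Ck k τ (t - 1) μ)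
      have hmem : τ0 ∈ Finset.Icc k t := by
        simp only [Finset.mem_Icc] at *; omega
      calc (Finset.Icc k t).inf' (Finset.nonempty_Icc.mpr hkt)
            (fun τ => pdpaCost y γ Ck k τ t μ) ≤ pdpaCost y γ Ck k τ0 t μ :=
            Finset.inf'_le _ hmem
        _ = pdpaCost y γ Ck k τ0 (t - 1) μ + γ (y t) μ := by
            apply pdpaCost_step; omega
            simp only [Finset.mem_Icc] at hτ0; omega
        _ = B + γ (y t) μ := by rw [hB, hτ0eq]
    · calc (Finset.Icc k t).inf' (Finset.nonempty_Icc.mpr hkt)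
            (fun τ => pdpaCost y γ Ck k τ t μ) ≤ pdpaCost y γ Ck k t t μ :=
            Finset.inf'_le _ (Finset.mem_Icc.mpr ⟨hkt, le_refl t⟩)
        _ = Ck (k - 1) t := hft
  · apply Finset.le_inf'
    intro τ hτ
    simp only [Finset.mem_Icc] at hτ
    by_cases h : τ = t
    · subst h; rw [hft]; exact min_le_right _ _
    · have hτ1 : τ ≤ t - 1 := by omega
      have : pdpaCost y γ Ck k τ t μ = pdpaCost y γ Ck k τ (t - 1) μ + γ (y t) μ :=
        pdpaCost_step y γ Ck k τ t (by omega) hτ1 μ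
      rw [this]
      refine le_trans (min_le_left _ _) (add_le_add_left ?_ _)
      exact Finset.inf'_le _ (Finset.mem_Icc.mpr ⟨hτ.1, hτ1⟩)
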